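/- Let d ≥ 1, 0 < m < L, ρ ∈ (0,1), and let f : ℝ^d → ℝ be differentiable, m-strongly convex with L-Lipschitz gradient, with minimizer x⋆ satisfying ∇f(x⋆) = 0. Let (x_k) be any sequence in ℝ^d and set x̃_k := x_k − x⋆ and ∇_k := ∇f(x_k). Define S_0 := ⟨ L x̃_0 − ∇_0, ∇_0 − m x̃_0 ⟩ and, for k ≥ 1, S_k := ⟨ L x̃_k − ∇_k − ρ² ( L x̃_{k−1} − ∇_{k−1} ), ∇_k − m x̃_k ⟩. Then for every N ≥ 0: Σ_{k=0}^{N} ρ^{−2k} S_k ≥ 0. -/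

import Mathlib

open scoped RealInnerProductSpace

section Helpers

variable {E : Type*} [NormedAddCommGroup E] [InnerProductSpace ℝ E] [CompleteSpace E]

private lemma line_hasDerivAt (φ : E → ℝ) (φ' : E → E) (hg : ∀ z, HasGradientAt φ (φ' z) z)
    (a b : E) (t : ℝ) :
    HasDerivAt (fun s : ℝ => φ (b + s • (a - b))) ⟪φ' (b + t • (a - b)), a - b⟫ t := by
  have h1 : HasDerivAt (fun s : ℝ => b + s • (a - b)) (a - b) t := by
    simpa using ((hasDerivAt_id t).smul_const (a - b)).const_add b
  have h2 := hasGradientAt_iff_hasFDerivAt.mp (hg (b + t • (a - b)))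
  have h3 := h2.comp_hasDerivAt t h1
  simp [Function.comp, InnerProductSpace.toDual_apply_apply] at h3
  exact h3

private lemma grad_lower (φ : E → ℝ) (φ' : E → E) (hg : ∀ z, HasGradientAt φ (φ' z) z)
    (hc : ConvexOn ℝ Set.univ φ) (a b : E) :
    φ b + ⟪φ' b, a - b⟫ ≤ φ a := by
  have hconv : ConvexOn ℝ Set.univ (fun s : ℝ => φ (b + s • (a - b))) := by
    have h := hc.comp_affineMap (AffineMap.lineMap b a)
    rw [Set.preimage_univ] at h
    suffices e : (fun s : ℝ => φ (b + s • (a - b))) = φ ∘ AffineMap.lineMap b a by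
      rw [e]; exact h
    funext s
    simp only [Function.comp_apply, AffineMap.lineMap_apply]
    rw [add_comm]
    simp
  have hd := line_hasDerivAt φ φ' hg a b 0
  have hs := hconv.le_slope_of_hasDerivAt (Set.mem_univ 0) (Set.mem_univ 1) one_pos
    (by simpa using hd)
  simp [slope_def_field] at hs
  linarith

private lemma descent_lemma (φ : E → ℝ) (φ' : E → E) (hg : ∀ z, HasGradientAt φ (φ' z) z)
    (C : ℝ) (hlip : ∀ u v, ‖φ' u - φ' v‖ ≤ C * ‖u - v‖) (a b : E) :
    φ a ≤ φ b + ⟪φ' b, a - b⟫ + C / 2 * ‖a - b‖ ^ 2 := by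
  set c : ℝ → E := fun t => b + t • (a - b) with hcdef
  set A : ℝ := ⟪φ' b, a - b⟫ with hAdef
  set B : ℝ := C / 2 * ‖a - b‖ ^ 2 with hBdef
  set ψ : ℝ → ℝ := fun t => φ (c t) - t * A - t ^ 2 * B with hψdef
  have hψ : ∀ t : ℝ, HasDerivAt ψ (⟪φ' (c t), a - b⟫ - A - 2 * t * B) t := by
    intro t
    have h1 := line_hasDerivAt φ φ' hg a b t
    have h2 : HasDerivAt (fun s : ℝ => s * A) A t := hasDerivAt_mul_const A
    have h3 : HasDerivAt (fun s : ℝ => s ^ 2 * B) (2 * t * B) t := by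
      simpa using (hasDerivAt_pow 2 t).mul_const B
    exact (h1.sub h2).sub h3
  have hanti : AntitoneOn ψ (Set.Icc (0:ℝ) 1) := by
    apply antitoneOn_of_deriv_nonpos (convex_Icc 0 1)
    · exact Continuous.continuousOn (by
        refine continuous_iff_continuousAt.mpr fun t => ?_
        exact (hψ t).continuousAt)
    · intro t _
      exact (hψ t).differentiableAt.differentiableWithinAt
    · intro t ht
      rw [interior_Icc] at ht
      rw [(hψ t).deriv]
      have hb1 : ⟪φ' (c t) - φ' b, a - b⟫ ≤ ‖φ' (c t) - φ' b‖ * ‖a - b‖ :=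
        real_inner_le_norm _ _
      have hb2 : ‖φ' (c t) - φ' b‖ ≤ C * (t * ‖a - b‖) := by
        have := hlip (c t) b
        have hcb : c t - b = t • (a - b) := by simp [hcdef]
        rw [hcb, norm_smul, Real.norm_eq_abs, abs_of_pos ht.1] at this
        exact this
      have hinner : ⟪φ' (c t) - φ' b, a - b⟫ = ⟪φ' (c t), a - b⟫ - A := by
        rw [inner_sub_left]
      rw [hBdef]
      nlinarith [norm_nonneg (a - b), ht.1.le]
  have h01 := hanti (Set.left_mem_Icc.mpr zero_le_one) (Set.right_mem_Icc.mpr zero_le_one)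
    zero_le_one
  have hc0 : c 0 = b := by simp [hcdef]
  have hc1 : c 1 = a := by simp [hcdef]
  simp only [hψdef, hc0, hc1] at h01
  norm_num at h01
  linarith

private lemma interp_lemma (φ : E → ℝ) (φ' : E → E) (hg : ∀ z, HasGradientAt φ (φ' z) z)
    (hc : ConvexOn ℝ Set.univ φ) (C : ℝ) (hC : 0 < C)
    (hdesc : ∀ a b, φ a ≤ φ b + ⟪φ' b, a - b⟫ + C / 2 * ‖a - b‖ ^ 2) (a b : E) :
    φ b + ⟪φ' b, a - b⟫ + 1 / (2 * C) * ‖φ' a - φ' b‖ ^ 2 ≤ φ a := by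
  set w : E := a - (1 / C) • (φ' a - φ' b) with hwdef
  set N : ℝ := ‖φ' a - φ' b‖ ^ 2 with hNdef
  have h1 : φ b + ⟪φ' b, w - b⟫ ≤ φ w := grad_lower φ φ' hg hc w b
  have h2 : φ w ≤ φ a + ⟪φ' a, w - a⟫ + C / 2 * ‖w - a‖ ^ 2 := hdesc w a
  have hwa : w - a = -((1 / C) • (φ' a - φ' b)) := by simp [hwdef]
  have e1 : ⟪φ' a, w - a⟫ = -(1 / C) * ⟪φ' a, φ' a - φ' b⟫ := by
    rw [hwa, inner_neg_right, real_inner_smul_right]; ring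
  have e2 : ‖w - a‖ ^ 2 = (1 / C) ^ 2 * N := by
    rw [hwa, norm_neg, norm_smul, Real.norm_eq_abs, mul_pow, sq_abs, hNdef]
  have e3 : ⟪φ' b, w - b⟫ = ⟪φ' b, a - b⟫ - (1 / C) * ⟪φ' b, φ' a - φ' b⟫ := by
    have hwb : w - b = (a - b) - (1 / C) • (φ' a - φ' b) := by rw [hwdef]; abel
    rw [hwb, inner_sub_right, real_inner_smul_right]
  have e4 : ⟪φ' a, φ' a - φ' b⟫ - ⟪φ' b, φ' a - φ' b⟫ = N := by
    rw [← inner_sub_left, hNdef, real_inner_self_eq_norm_sq]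
  have hC' : C ≠ 0 := ne_of_gt hC
  rw [e1, e2] at h2
  rw [e3] at h1
  have key : (1 / C) * ⟪φ' b, φ' a - φ' b⟫ - (1 / C) * ⟪φ' a, φ' a - φ' b⟫
      = -((1 / C) * N) := by rw [← e4]; ring
  have hq : C / 2 * ((1 / C) ^ 2 * N) = 1 / (2 * C) * N := by
    field_simp
  have hq2 : 1 / (2 * C) * N - (1 / C) * N = -(1 / (2 * C) * N) := by
    field_simp; ring
  linarith

private lemma sq_gradient (m : ℝ) (f : E → ℝ) (f' : E → E)
    (hg : ∀ z, HasGradientAt f (f' z) z) (z : E) :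
    HasGradientAt (fun w => f w - m / 2 * ‖w‖ ^ 2) (f' z - m • z) z := by
  rw [hasGradientAt_iff_hasFDerivAt]
  have h1 := hasGradientAt_iff_hasFDerivAt.mp (hg z)
  have h2 := (hasStrictFDerivAt_norm_sq z).hasFDerivAt
  have h3 := h1.sub (h2.const_smul (m / 2))
  refine HasFDerivAt.congr_fderiv h3 ?_
  ext y
  simp [InnerProductSpace.toDual_apply_apply, inner_sub_left, real_inner_smul_left, two_smul,
    inner_add_left]
  ring

end Helpers

set_option maxHeartbeats 1000000 in
/-- Static ρ-weighted off-by-one IQC for the gradient of a strongly convex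
smooth function: the accumulated supply is nonnegative. -/
theorem static_off_by_one_iqc
    (d : ℕ) (hd : 1 ≤ d)
    (m L ρ : ℝ) (hm : 0 < m) (hmL : m < L) (hρ0 : 0 < ρ) (hρ1 : ρ < 1)
    (f : EuclideanSpace ℝ (Fin d) → ℝ)
    (f' : EuclideanSpace ℝ (Fin d) → EuclideanSpace ℝ (Fin d))
    (hgrad : ∀ x, HasGradientAt f (f' x) x)
    (hsc : ConvexOn ℝ Set.univ (fun x => f x - m / 2 * ‖x‖ ^ 2))
    (hlip : ∀ x y, ‖f' x - f' y‖ ≤ L * ‖x - y‖)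
    (xstar : EuclideanSpace ℝ (Fin d)) (hstar : f' xstar = 0)
    (x : ℕ → EuclideanSpace ℝ (Fin d))
    (S : ℕ → ℝ)
    (hS0 : S 0 = ⟪L • (x 0 - xstar) - f' (x 0), f' (x 0) - m • (x 0 - xstar)⟫)
    (hSk : ∀ k : ℕ, S (k + 1) =
      ⟪L • (x (k + 1) - xstar) - f' (x (k + 1))
          - ρ ^ 2 • (L • (x k - xstar) - f' (x k)),
        f' (x (k + 1)) - m • (x (k + 1) - xstar)⟫) :
    ∀ N : ℕ, 0 ≤ ∑ k ∈ Finset.range (N + 1), ρ ^ (-(2 * (k : ℤ))) * S k := by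
  have hLm : (0:ℝ) < L - m := by linarith
  set g : EuclideanSpace ℝ (Fin d) → ℝ := fun z => f z - m / 2 * ‖z‖ ^ 2 with hgdef
  set g' : EuclideanSpace ℝ (Fin d) → EuclideanSpace ℝ (Fin d) := fun z => f' z - m • z
    with hg'def
  have hgg : ∀ z, HasGradientAt g (g' z) z := fun z => sq_gradient m f f' hgrad z
  have hdf := descent_lemma f f' hgrad L hlip
  have hdg : ∀ a b, g a ≤ g b + ⟪g' b, a - b⟫ + (L - m) / 2 * ‖a - b‖ ^ 2 := by
    intro a b
    have h1 := hdf a b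
    have hid : ‖a‖ ^ 2 = ‖b‖ ^ 2 + 2 * ⟪b, a - b⟫ + ‖a - b‖ ^ 2 := by
      have := norm_add_sq_real b (a - b)
      simpa using this
    have hin : ⟪g' b, a - b⟫ = ⟪f' b, a - b⟫ - m * ⟪b, a - b⟫ := by
      simp only [hg'def]
      rw [inner_sub_left, real_inner_smul_left]
    have hid' : m / 2 * ‖a‖ ^ 2
        = m / 2 * ‖b‖ ^ 2 + m * ⟪b, a - b⟫ + m / 2 * ‖a - b‖ ^ 2 := by
      rw [hid]; ring
    rw [hgdef]
    simp only
    rw [hin]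
    linarith [h1, hid']
  have hKI := interp_lemma g g' hgg hsc (L - m) hLm hdg
  set xt : ℕ → EuclideanSpace ℝ (Fin d) := fun k => x k - xstar with hxtdef
  set u : ℕ → EuclideanSpace ℝ (Fin d) := fun k => g' (x k) - g' xstar with hudef
  set G : ℕ → ℝ := fun k => g (x k) - g xstar - ⟪g' xstar, xt k⟫ with hGdef
  set β : ℕ → ℝ := fun k => (L - m) * G k - ‖u k‖ ^ 2 / 2 with hβdef
  have hgu : ∀ k, g' (x k) = u k + g' xstar := by intro k; simp [hudef]
  have eA : ∀ s t v : EuclideanSpace ℝ (Fin d), ⟪v + s, -t⟫ = -⟪v, t⟫ - ⟪s, t⟫ := by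
    intro s t v
    rw [inner_neg_right, inner_add_left]
    ring
  have eB : ∀ s v p q : EuclideanSpace ℝ (Fin d),
      ⟪v + s, p - q⟫ = ⟪v, p⟫ - ⟪v, q⟫ + ⟪s, p⟫ - ⟪s, q⟫ := by
    intro s v p q
    rw [inner_add_left, inner_sub_right, inner_sub_right]
    ring
  have expand0 : ∀ (Λ : ℝ) (p v : EuclideanSpace ℝ (Fin d)),
      ⟪Λ • p - v, v⟫ = Λ * ⟪v, p⟫ - ‖v‖ ^ 2 := by
    intro Λ p v
    rw [inner_sub_left, real_inner_smul_left, real_inner_self_eq_norm_sq,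
      real_inner_comm p v]
  have expand1 : ∀ (Λ c : ℝ) (p q v w : EuclideanSpace ℝ (Fin d)),
      ⟪Λ • p - v - c • (Λ • q - w), v⟫
        = Λ * ⟪v, p⟫ - ‖v‖ ^ 2 - c * (Λ * ⟪v, q⟫ - ⟪w, v⟫) := by
    intro Λ c p q v w
    simp only [inner_sub_left, real_inner_smul_left, real_inner_self_eq_norm_sq]
    rw [real_inner_comm p v, real_inner_comm q v]
  have hβpos : ∀ k, 0 ≤ β k := by
    intro k
    have h := hKI (x k) xstar
    have e1 : x k - xstar = xt k := rfl
    have e2 : g' (x k) - g' xstar = u k := rfl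
    rw [e1, e2] at h
    have hI : G k ≥ 1 / (2 * (L - m)) * ‖u k‖ ^ 2 := by
      rw [hGdef]; simp only; linarith
    have hmul := mul_le_mul_of_nonneg_left hI hLm.le
    have hq : (L - m) * (1 / (2 * (L - m)) * ‖u k‖ ^ 2) = ‖u k‖ ^ 2 / 2 := by
      field_simp
    rw [hβdef]; simp only; linarith
  have hA : ∀ k, (L - m) * G k + ‖u k‖ ^ 2 / 2 ≤ (L - m) * ⟪u k, xt k⟫ := by
    intro k
    have h := hKI xstar (x k)
    have e1 : g' xstar - g' (x k) = -(u k) := by rw [hudef]; simp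
    have e2 : ⟪g' (x k), xstar - x k⟫ = -⟪u k, xt k⟫ - ⟪g' xstar, xt k⟫ := by
      rw [hgu k]
      have hneg : xstar - x k = -(xt k) := by rw [hxtdef]; simp
      rw [hneg, eA]
    rw [e1, e2, norm_neg] at h
    have hI : G k + 1 / (2 * (L - m)) * ‖u k‖ ^ 2 ≤ ⟪u k, xt k⟫ := by
      rw [hGdef]; simp only; linarith
    have hmul := mul_le_mul_of_nonneg_left hI hLm.le
    have hq : (L - m) * (1 / (2 * (L - m)) * ‖u k‖ ^ 2) = ‖u k‖ ^ 2 / 2 := by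
      field_simp
    nlinarith
  have hB : ∀ k, (L - m) * (G (k + 1) - G k)
      + (‖u (k + 1)‖ ^ 2 - 2 * ⟪u k, u (k + 1)⟫ + ‖u k‖ ^ 2) / 2
      ≤ (L - m) * (⟪u (k + 1), xt (k + 1)⟫ - ⟪u (k + 1), xt k⟫) := by
    intro k
    have h := hKI (x k) (x (k + 1))
    have e1 : g' (x k) - g' (x (k + 1)) = u k - u (k + 1) := by
      rw [hudef]; simp only; abel
    have e2 : ⟪g' (x (k + 1)), x k - x (k + 1)⟫
        = ⟪u (k + 1), xt k⟫ - ⟪u (k + 1), xt (k + 1)⟫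
          + ⟪g' xstar, xt k⟫ - ⟪g' xstar, xt (k + 1)⟫ := by
      rw [hgu (k + 1)]
      have hx' : x k - x (k + 1) = xt k - xt (k + 1) := by rw [hxtdef]; simp only; abel
      rw [hx', eB]
    have e3 : ‖u k - u (k + 1)‖ ^ 2
        = ‖u (k + 1)‖ ^ 2 - 2 * ⟪u k, u (k + 1)⟫ + ‖u k‖ ^ 2 := by
      rw [norm_sub_sq_real]; ring
    rw [e1, e2, e3] at h
    have hI : G (k + 1) - G k + (⟪u (k + 1), xt k⟫ - ⟪u (k + 1), xt (k + 1)⟫)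
        + 1 / (2 * (L - m)) * (‖u (k + 1)‖ ^ 2 - 2 * ⟪u k, u (k + 1)⟫ + ‖u k‖ ^ 2) ≤ 0 := by
      rw [hGdef]; simp only; linarith
    have hmul := mul_le_mul_of_nonneg_left hI hLm.le
    have hq : (L - m) * (1 / (2 * (L - m))
        * (‖u (k + 1)‖ ^ 2 - 2 * ⟪u k, u (k + 1)⟫ + ‖u k‖ ^ 2))
        = (‖u (k + 1)‖ ^ 2 - 2 * ⟪u k, u (k + 1)⟫ + ‖u k‖ ^ 2) / 2 := by
      field_simp
    nlinarith
  have hfirst : ∀ k, L • (x k - xstar) - f' (x k) = (L - m) • xt k - u k := by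
    intro k
    rw [hxtdef, hudef, hg'def]
    simp only [hstar]
    module
  have hsecond : ∀ k, f' (x k) - m • (x k - xstar) = u k := by
    intro k
    rw [hudef, hg'def]
    simp only [hstar]
    module
  have hS0' : S 0 = (L - m) * ⟪u 0, xt 0⟫ - ‖u 0‖ ^ 2 := by
    rw [hS0, hfirst, hsecond, expand0]
  have hSk' : ∀ k, S (k + 1) = (L - m) * ⟪u (k + 1), xt (k + 1)⟫ - ‖u (k + 1)‖ ^ 2
      - ρ ^ 2 * ((L - m) * ⟪u (k + 1), xt k⟫ - ⟪u k, u (k + 1)⟫) := by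
    intro k
    rw [hSk k, hfirst, hfirst, hsecond, expand1]
  have hbase : β 0 ≤ S 0 := by
    rw [hS0', hβdef]; simp only; linarith [hA 0]
  have hstep : ∀ k, β (k + 1) - ρ ^ 2 * β k ≤ S (k + 1) := by
    intro k
    rw [hSk' k, hβdef]
    simp only
    nlinarith [mul_nonneg (show (0:ℝ) ≤ 1 - ρ ^ 2 by nlinarith) (sub_nonneg.2 (hA (k + 1))),
      mul_nonneg (sq_nonneg ρ) (sub_nonneg.2 (hB k))]
  have key : ∀ N : ℕ, ρ ^ (-(2 * (N : ℤ))) * β N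
      ≤ ∑ k ∈ Finset.range (N + 1), ρ ^ (-(2 * (k : ℤ))) * S k := by
    intro N
    induction N with
    | zero => simpa using hbase
    | succ n ih =>
      rw [Finset.sum_range_succ]
      have hw : (0:ℝ) < ρ ^ (-(2 * ((n + 1 : ℕ) : ℤ))) := zpow_pos hρ0 _
      have hws : ρ ^ (-(2 * ((n + 1 : ℕ) : ℤ))) * ρ ^ 2 = ρ ^ (-(2 * (n : ℤ))) := by
        rw [← zpow_natCast ρ 2, ← zpow_add₀ (ne_of_gt hρ0)]
        congr 1
        push_cast
        ring
      have h1 := mul_le_mul_of_nonneg_left (hstep n) hw.le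
      have e : ρ ^ (-(2 * ((n + 1 : ℕ) : ℤ))) * ρ ^ 2 * β n = ρ ^ (-(2 * (n : ℤ))) * β n := by
        rw [hws]
      nlinarith [ih, h1, e]
  intro N
  have h1 := key N
  have h2 : 0 ≤ ρ ^ (-(2 * (N : ℤ))) * β N :=
    mul_nonneg (zpow_pos hρ0 _).le (hβpos N)
  linarith
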